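/- Fix ε with 0 < |ε| < 1 and let Φ_ε be the rational map Φ_ε(x,y) = ( (ε(ε+1)x² + εxy + (1−2ε)x)/D(x,y), (ε(2ε−4)x² − ε(ε+3)xy + 6εx − εy² + (2ε+1)y)/D(x,y) ), D(x,y) = 2ε²x² − ε(ε+1)x − εy + 2ε + 1. Then the set of energy levels h ∈ (−5/2, −2) for which the restriction of Φ_ε to the invariant conic C_h is periodic (i.e. there exists q ≥ 1 such that the q-th iterate of Φ_ε fixes every point of C_h whose forward orbit is defined) is dense in the interval (−5/2, −2). -/

import Mathlib

set_option maxRecDepth 8000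
set_option maxHeartbeats 1000000


/-- Denominator of the Kahan–Hirota–Kimura map `Φ_ε` of the system
`ẋ = x(x+y-2)`, `ẏ = -x(2x+y-3)`. -/
noncomputable def Dps (ε x y : ℝ) : ℝ :=
  2 * ε ^ 2 * x ^ 2 - ε * (ε + 1) * x - ε * y + 2 * ε + 1

/-- The Kahan–Hirota–Kimura map `Φ_ε` of the system `ẋ = x(x+y-2)`, `ẏ = -x(2x+y-3)`. -/
noncomputable def Phips (ε : ℝ) (q : ℝ × ℝ) : ℝ × ℝ :=
  ((ε * (ε + 1) * q.1 ^ 2 + ε * q.1 * q.2 + (1 - 2 * ε) * q.1) / Dps ε q.1 q.2,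
   (ε * (2 * ε - 4) * q.1 ^ 2 - ε * (ε + 3) * q.1 * q.2 + 6 * ε * q.1 - ε * q.2 ^ 2
      + (2 * ε + 1) * q.2) / Dps ε q.1 q.2)

/-- The invariant conic `C_h` of `Φ_ε`. -/
def Cps (ε h : ℝ) : Set (ℝ × ℝ) :=
  {q : ℝ × ℝ | (2 - 5 * ε ^ 2 - 2 * ε ^ 2 * h) * q.1 ^ 2 + 2 * q.1 * q.2 + q.2 ^ 2
      - 6 * q.1 - 4 * q.2 - 2 * h = 0}

/-- For `0 < |ε| < 1`, the set of energy levels `h ∈ (-5/2, -2)` for which the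
restriction of `Φ_ε` to the invariant conic `C_h` is periodic is dense in the
interval `(-5/2, -2)`. -/
private lemma divH (A N1 N2 D h : ℝ) (hD : D ≠ 0)
    (hkey : A * N1 ^ 2 + 2 * N1 * N2 + N2 ^ 2 - 6 * N1 * D - 4 * N2 * D - 2 * h * D ^ 2 = 0) :
    A * (N1 / D) ^ 2 + 2 * (N1 / D) * (N2 / D) + (N2 / D) ^ 2
      - 6 * (N1 / D) - 4 * (N2 / D) - 2 * h = 0 := by
  field_simp
  linear_combination hkey

lemma inv_lemma (ε h : ℝ) (z : ℝ × ℝ) (hz : z ∈ Cps ε h)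
    (hD : Dps ε z.1 z.2 ≠ 0) : Phips ε z ∈ Cps ε h := by
  obtain ⟨x, y⟩ := z
  simp only [Cps, Set.mem_setOf_eq] at hz ⊢
  simp only [Dps] at hD
  simp only [Phips, Dps]
  apply divH _ _ _ _ _ hD
  linear_combination (1 + 4*ε + 4*ε^2 - 2*y*ε - 4*y*ε^2 + y^2*ε^2 - 2*x*ε - 6*x*ε^2
    - 4*x*ε^3 + 2*x*y*ε^2 + 2*x*y*ε^3 + 5*x^2*ε^2 + 2*x^2*ε^3 + x^2*ε^4) * hz

lemma xne (ε h : ℝ) (hh : h < -2) (z : ℝ × ℝ) (hz : z ∈ Cps ε h) : z.1 ≠ 0 := by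
  intro h0
  simp only [Cps, Set.mem_setOf_eq, h0] at hz
  nlinarith [sq_nonneg (z.2 - 2)]

noncomputable def Wc (s : ℝ) (z : ℝ × ℝ) : ℂ :=
  ((s : ℂ) * Complex.I * ((z.2 : ℂ) - 2) + (s : ℂ) ^ 2
    - (1 - (s : ℂ) * Complex.I) * (z.1 : ℂ)) / (z.1 : ℂ)

private lemma keyPoly (e s x y : ℂ)
    (hz : (2 - e ^ 2 * (1 - s ^ 2)) * x ^ 2 + 2 * x * y + y ^ 2 - 6 * x - 4 * y + 4 + s ^ 2 = 0) :
    (1 - e * s * Complex.I) * (x *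
      (s * Complex.I * ((e * (2 * e - 4) * x ^ 2 - e * (e + 3) * x * y + 6 * e * x - e * y ^ 2
          + (2 * e + 1) * y)
        - 2 * (2 * e ^ 2 * x ^ 2 - e * (e + 1) * x - e * y + 2 * e + 1))
       + s ^ 2 * (2 * e ^ 2 * x ^ 2 - e * (e + 1) * x - e * y + 2 * e + 1)
       - (1 - s * Complex.I) * (e * (e + 1) * x ^ 2 + e * x * y + (1 - 2 * e) * x)))
    = (1 + e * s * Complex.I) * (s * Complex.I * (y - 2) + s ^ 2 - (1 - s * Complex.I) * x)
        * (e * (e + 1) * x ^ 2 + e * x * y + (1 - 2 * e) * x) := by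
  linear_combination (-2 * Complex.I * x * e * s) * hz +
    (4 * e * s ^ 2 * x - 2 * e * s ^ 2 * x * y - 2 * e * s ^ 2 * x ^ 2 - 2 * e ^ 2 * s ^ 2 * x ^ 2
      + 2 * e ^ 2 * s ^ 2 * x ^ 3) * Complex.I_sq

private lemma wstep (c1 c2 c3 n1 n2 d : ℂ) (hd : d ≠ 0) (hn : n1 ≠ 0) :
    (c1 * (n2 / d - 2) + c2 - c3 * (n1 / d)) / (n1 / d)
      = (c1 * (n2 - 2 * d) + c2 * d - c3 * n1) / n1 := by
  field_simp
  try ring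
  try tauto

lemma funeq (ε h s : ℝ) (hs2 : s ^ 2 = -4 - 2 * h) (z : ℝ × ℝ) (hz : z ∈ Cps ε h)
    (hD : Dps ε z.1 z.2 ≠ 0) (hx : z.1 ≠ 0) (hx' : (Phips ε z).1 ≠ 0) :
    Wc s (Phips ε z) = (1 + ε * s * Complex.I) / (1 - ε * s * Complex.I) * Wc s z := by
  obtain ⟨x, y⟩ := z
  simp only [Cps, Set.mem_setOf_eq] at hz
  simp only [Dps] at hD
  have hN1 : ε * (ε + 1) * x ^ 2 + ε * x * y + (1 - 2 * ε) * x ≠ 0 := by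
    intro hc
    apply hx'
    simp only [Phips]
    rw [show (ε * (ε + 1) * (x, y).1 ^ 2 + ε * (x, y).1 * (x, y).2 + (1 - 2 * ε) * (x, y).1) = 0
      from hc, zero_div]
  have hxc : (x : ℂ) ≠ 0 := Complex.ofReal_ne_zero.mpr hx
  have hDc : (2 * (ε:ℂ) ^ 2 * x ^ 2 - ε * (ε + 1) * x - ε * y + 2 * ε + 1) ≠ 0 := by
    intro hc; apply hD; exact_mod_cast hc
  have hN1c : ((ε:ℂ) * (ε + 1) * x ^ 2 + ε * x * y + (1 - 2 * ε) * x) ≠ 0 := by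
    intro hc; apply hN1; exact_mod_cast hc
  have hden : (1 : ℂ) - ε * s * Complex.I ≠ 0 := by
    intro hc
    have : ((1 : ℂ) - ε * s * Complex.I).re = 0 := by rw [hc]; simp
    simp [Complex.sub_re, Complex.mul_re] at this
  have hc1 : ((2 - 5 * (ε:ℂ) ^ 2 - 2 * ε ^ 2 * h) * x ^ 2 + 2 * x * y + y ^ 2
      - 6 * x - 4 * y - 2 * h) = 0 := by exact_mod_cast hz
  have hc2 : ((s : ℂ)) ^ 2 = -4 - 2 * (h : ℂ) := by exact_mod_cast hs2
  have hz' : (2 - (ε:ℂ) ^ 2 * (1 - (s:ℂ) ^ 2)) * x ^ 2 + 2 * x * y + y ^ 2 - 6 * x - 4 * y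
      + 4 + (s:ℂ) ^ 2 = 0 := by
    linear_combination hc1 + ((ε:ℂ) ^ 2 * x ^ 2 + 1) * hc2
  have key := keyPoly (ε:ℂ) (s:ℂ) (x:ℂ) (y:ℂ) hz'
  have step1 : Wc s (Phips ε (x, y))
      = ((s:ℂ) * Complex.I * (((ε:ℂ) * (2 * ε - 4) * x ^ 2 - ε * (ε + 3) * x * y + 6 * ε * x
            - ε * y ^ 2 + (2 * ε + 1) * y)
          - 2 * (2 * (ε:ℂ) ^ 2 * x ^ 2 - ε * (ε + 1) * x - ε * y + 2 * ε + 1))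
        + (s:ℂ) ^ 2 * (2 * (ε:ℂ) ^ 2 * x ^ 2 - ε * (ε + 1) * x - ε * y + 2 * ε + 1)
        - (1 - (s:ℂ) * Complex.I) * ((ε:ℂ) * (ε + 1) * x ^ 2 + ε * x * y + (1 - 2 * ε) * x))
        / ((ε:ℂ) * (ε + 1) * x ^ 2 + ε * x * y + (1 - 2 * ε) * x) := by
    simp only [Wc, Phips, Dps]
    push_cast
    rw [wstep _ _ _ _ _ _ hDc hN1c]
  rw [step1]
  simp only [Wc]
  rw [div_mul_div_comm, div_eq_div_iff hN1c (mul_ne_zero hden hxc)]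
  linear_combination key

lemma Winj (ε h s : ℝ) (hh : h < -2) (hs0 : s ≠ 0) (z1 z2 : ℝ × ℝ)
    (hz1 : z1 ∈ Cps ε h) (hz2 : z2 ∈ Cps ε h) (hW : Wc s z1 = Wc s z2) : z1 = z2 := by
  have hx1 : z1.1 ≠ 0 := xne ε h hh z1 hz1
  have hx2 : z2.1 ≠ 0 := xne ε h hh z2 hz2
  obtain ⟨x1, y1⟩ := z1
  obtain ⟨x2, y2⟩ := z2
  simp only at hx1 hx2
  have hx1c : (x1 : ℂ) ≠ 0 := Complex.ofReal_ne_zero.mpr hx1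
  have hx2c : (x2 : ℂ) ≠ 0 := Complex.ofReal_ne_zero.mpr hx2
  simp only [Wc] at hW
  rw [div_eq_div_iff hx1c hx2c] at hW
  have hre := congrArg Complex.re hW
  have him := congrArg Complex.im hW
  simp [Complex.add_re, Complex.add_im, Complex.sub_re, Complex.sub_im, Complex.mul_re,
    Complex.mul_im, Complex.I_re, Complex.I_im, Complex.ofReal_re, Complex.ofReal_im,
    ← Complex.ofReal_pow] at hre him
  have h4 : s ^ 2 * (x2 - x1) = 0 := by linear_combination hre
  have hxx : x1 = x2 := by
    rcases mul_eq_zero.mp h4 with hc | hc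
    · exact absurd hc (pow_ne_zero 2 hs0)
    · linarith
  have hyy : y1 = y2 := by
    have h2 : s * ((y1 - 2) * x2) = s * ((y2 - 2) * x1) := by linear_combination him
    have h3 : (y1 - 2) * x2 = (y2 - 2) * x1 := mul_left_cancel₀ hs0 h2
    rw [hxx] at h3
    have := mul_right_cancel₀ hx2 h3
    linarith
  rw [hxx, hyy]
lemma periodic (ε h s : ℝ) (hh : h < -2) (hs0 : s ≠ 0) (hs2 : s ^ 2 = -4 - 2 * h)
    (q : ℕ) (hq : ((1 + ε * s * Complex.I) / (1 - ε * s * Complex.I)) ^ q = 1)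
    (z : ℝ × ℝ) (hz : z ∈ Cps ε h)
    (hD : ∀ n : ℕ, Dps ε ((Phips ε)^[n] z).1 ((Phips ε)^[n] z).2 ≠ 0) :
    (Phips ε)^[q] z = z := by
  have mem : ∀ n : ℕ, (Phips ε)^[n] z ∈ Cps ε h := by
    intro n
    induction n with
    | zero => simpa
    | succ n ih =>
      rw [Function.iterate_succ_apply']
      exact inv_lemma ε h _ ih (hD n)
  have hWn : ∀ n : ℕ, Wc s ((Phips ε)^[n] z)
      = ((1 + ε * s * Complex.I) / (1 - ε * s * Complex.I)) ^ n * Wc s z := by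
    intro n
    induction n with
    | zero => simp
    | succ n ih =>
      have hx' : (Phips ε ((Phips ε)^[n] z)).1 ≠ 0 := by
        have := xne ε h hh _ (mem (n + 1))
        rwa [Function.iterate_succ_apply'] at this
      rw [Function.iterate_succ_apply',
        funeq ε h s hs2 _ (mem n) (hD n) (xne ε h hh _ (mem n)) hx', ih, pow_succ]
      ring
  apply Winj ε h s hh hs0 _ _ (mem q) hz
  rw [hWn q, hq, one_mul]

lemma lam_root (a : ℝ) (r : ℚ) (hr : Real.arctan a = Real.pi * r) :
    ((1 + (a : ℂ) * Complex.I) / (1 - (a : ℂ) * Complex.I)) ^ r.den = 1 := by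
  set θ := Real.arctan a with hθ
  have hcos : Real.cos θ ≠ 0 := ne_of_gt (Real.cos_arctan_pos a)
  have hcosc : (Real.cos θ : ℂ) ≠ 0 := Complex.ofReal_ne_zero.mpr hcos
  have hsin : Real.sin θ = a * Real.cos θ := by
    have ht : Real.tan θ = a := Real.tan_arctan a
    rw [Real.tan_eq_sin_div_cos, div_eq_iff hcos] at ht
    exact ht
  have hs : (Real.sin θ : ℂ) = (a : ℂ) * Real.cos θ := by exact_mod_cast hsin
  have hden : (1 : ℂ) - a * Complex.I ≠ 0 := by
    intro hc
    have : ((1 : ℂ) - a * Complex.I).re = 0 := by rw [hc]; simp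
    simp [Complex.sub_re, Complex.mul_re] at this
  have k1 : ((1 : ℂ) + a * Complex.I) * Real.cos θ = Complex.exp (θ * Complex.I) := by
    rw [Complex.exp_mul_I, ← Complex.ofReal_cos, ← Complex.ofReal_sin]
    linear_combination -Complex.I * hs
  have k2 : ((1 : ℂ) - a * Complex.I) * Real.cos θ = Complex.exp ((-θ : ℝ) * Complex.I) := by
    rw [Complex.exp_mul_I, ← Complex.ofReal_cos, ← Complex.ofReal_sin, Real.cos_neg,
      Real.sin_neg, Complex.ofReal_neg]
    linear_combination Complex.I * hs
  have hlam : (1 + (a : ℂ) * Complex.I) / (1 - a * Complex.I)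
      = Complex.exp (2 * θ * Complex.I) := by
    rw [div_eq_iff hden]
    have e3 : Complex.exp (2 * θ * Complex.I) * (((1 : ℂ) - a * Complex.I) * Real.cos θ)
        = ((1 : ℂ) + a * Complex.I) * Real.cos θ := by
      rw [k1, k2, ← Complex.exp_add]
      congr 1
      push_cast
      ring
    have := mul_right_cancel₀ hcosc (by linear_combination e3 :
      (Complex.exp (2 * θ * Complex.I) * ((1 : ℂ) - a * Complex.I)) * Real.cos θ
        = ((1 : ℂ) + a * Complex.I) * Real.cos θ)
    linear_combination -this
  have hd : (r : ℝ) * r.den = r.num := by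
    rw [Rat.cast_def]
    field_simp
  have hq2 : (r.den : ℝ) * (2 * θ) = (r.num : ℝ) * (2 * Real.pi) := by
    rw [hr]
    linear_combination 2 * Real.pi * hd
  rw [hlam, ← Complex.exp_nat_mul]
  have harg : (r.den : ℂ) * (2 * θ * Complex.I) = (r.num : ℤ) * (2 * Real.pi * Complex.I) := by
    have hc : ((r.den : ℝ) * (2 * θ) : ℂ) = ((r.num : ℝ) * (2 * Real.pi) : ℂ) := by
      exact_mod_cast congrArg Complex.ofReal hq2
    push_cast at hc ⊢
    linear_combination Complex.I * hc
  rw [harg, Complex.exp_int_mul_two_pi_mul_I]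
theorem stmt_8 (ε : ℝ) (hε0 : 0 < |ε|) (hε1 : |ε| < 1) :
    Set.Ioo (-5 / 2 : ℝ) (-2 : ℝ) ⊆
      closure {h : ℝ | h ∈ Set.Ioo (-5 / 2 : ℝ) (-2 : ℝ) ∧
        ∃ q : ℕ, 1 ≤ q ∧ ∀ z ∈ Cps ε h,
          (∀ n : ℕ, Dps ε ((Phips ε)^[n] z).1 ((Phips ε)^[n] z).2 ≠ 0) →
          (Phips ε)^[q] z = z} := by
  intro h0 hh0
  obtain ⟨hh0l, hh0r⟩ := hh0
  have hεne : ε ≠ 0 := abs_pos.mp hε0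
  rw [Metric.mem_closure_iff]
  intro δ hδ
  set h1 : ℝ := max (h0 - δ / 2) ((-5 / 2 + h0) / 2) with hh1def
  have hh1l : (-5 / 2 : ℝ) < h1 := lt_of_lt_of_le (by linarith) (le_max_right _ _)
  have hh1lt : h1 < h0 := max_lt (by linarith) (by linarith)
  set f : ℝ → ℝ := fun t => Real.arctan (ε * Real.sqrt (-4 - 2 * t)) with hfdef
  have hcont : Continuous f := by
    apply Real.continuous_arctan.comp
    exact continuous_const.mul (Real.continuous_sqrt.comp (by continuity))
  have hfne : f h1 ≠ f h0 := by
    intro hc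
    have hlt : Real.sqrt (-4 - 2 * h0) < Real.sqrt (-4 - 2 * h1) :=
      Real.sqrt_lt_sqrt (by linarith) (by linarith)
    have h2 := Real.arctan_injective hc
    have h3 := mul_left_cancel₀ hεne h2
    exact hlt.ne h3.symm
  have hminmax : min (f h1) (f h0) / Real.pi < max (f h1) (f h0) / Real.pi :=
    (div_lt_div_iff_of_pos_right Real.pi_pos).mpr (min_lt_max.mpr hfne)
  obtain ⟨r, hr1, hr2⟩ := exists_rat_btwn hminmax
  have hrl : min (f h1) (f h0) < Real.pi * r := by
    rw [div_lt_iff₀ Real.pi_pos] at hr1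
    linarith
  have hrr : Real.pi * r < max (f h1) (f h0) := by
    rw [lt_div_iff₀ Real.pi_pos] at hr2
    linarith
  have hθmem : Real.pi * (r : ℝ) ∈ Set.uIcc (f h1) (f h0) := by
    rw [Set.mem_uIcc]
    rcases le_total (f h1) (f h0) with hle | hle
    · left
      rw [min_eq_left hle] at hrl
      rw [max_eq_right hle] at hrr
      exact ⟨le_of_lt hrl, le_of_lt hrr⟩
    · right
      rw [min_eq_right hle] at hrl
      rw [max_eq_left hle] at hrr
      exact ⟨le_of_lt hrl, le_of_lt hrr⟩
  obtain ⟨hstar, hstarmem, hfstar⟩ := intermediate_value_uIcc hcont.continuousOn hθmem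
  rw [Set.uIcc_of_le (le_of_lt hh1lt)] at hstarmem
  obtain ⟨hsl, hsr⟩ := hstarmem
  have hstarIoo : hstar ∈ Set.Ioo (-5 / 2 : ℝ) (-2 : ℝ) :=
    ⟨lt_of_lt_of_le hh1l hsl, lt_of_le_of_lt hsr hh0r⟩
  refine ⟨hstar, ⟨hstarIoo, ?_⟩, ?_⟩
  swap
  · rw [Real.dist_eq, abs_of_nonneg (by linarith)]
    have := le_max_left (h0 - δ / 2) ((-5 / 2 + h0) / 2)
    linarith
  set s : ℝ := Real.sqrt (-4 - 2 * hstar) with hsdef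
  have hspos : 0 < s := Real.sqrt_pos.mpr (by linarith [hstarIoo.2])
  have hs2 : s ^ 2 = -4 - 2 * hstar := Real.sq_sqrt (by linarith [hstarIoo.2])
  have hr_arctan : Real.arctan (ε * s) = Real.pi * r := hfstar
  have hroot := lam_root (ε * s) r hr_arctan
  have hroot' : ((1 + (ε : ℂ) * s * Complex.I) / (1 - (ε : ℂ) * s * Complex.I)) ^ r.den = 1 := by
    have hcast : ((ε * s : ℝ) : ℂ) = (ε : ℂ) * s := by push_cast; ring
    rw [hcast] at hroot
    exact hroot
  refine ⟨r.den, r.pos, fun z hz hD => periodic ε hstar s hstarIoo.2 (ne_of_gt hspos) hs2 r.den hroot' z hz hD⟩
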